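/- arXiv:1802.03582 — 2 statements merged into one kernel-verified Lean document; each statement's English description precedes it below -/
import Mathlib

section
/- Let L be a linear functional on ℝ[x,y] nonnegative on squares with L(x^{2k}) ≤ L(1)·a^{2k} and L(y^{2k}) ≤ L(1)·b^{2k} for all k ∈ ℕ, where a, b ≥ 0. Then for every n ∈ ℕ, |L((x − y)^n)| ≤ L(1)·(a + b)^n. -/
open MvPolynomial

theorem binomial_moment_bound (L : MvPolynomial (Fin 2) ℝ →ₗ[ℝ] ℝ)
    (a b : ℝ) (ha : 0 ≤ a) (hb : 0 ≤ b)
    (hsq : ∀ h : MvPolynomial (Fin 2) ℝ, 0 ≤ L (h ^ 2))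
    (hx : ∀ k : ℕ, L ((X 0) ^ (2 * k)) ≤ L 1 * a ^ (2 * k))
    (hy : ∀ k : ℕ, L ((X 1) ^ (2 * k)) ≤ L 1 * b ^ (2 * k)) :
    ∀ n : ℕ, |L ((X 0 - X 1) ^ n)| ≤ L 1 * (a + b) ^ n := by
  have hL1 : 0 ≤ L 1 := by simpa using hsq 1
  -- Cauchy–Schwarz for L
  have cs : ∀ p q : MvPolynomial (Fin 2) ℝ, (L (p * q)) ^ 2 ≤ L (p ^ 2) * L (q ^ 2) := by
    intro p q
    have h := discrim_le_zero (a := L (q ^ 2)) (b := 2 * L (p * q)) (c := L (p ^ 2)) ?_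
    · rw [discrim] at h; nlinarith
    · intro t
      have key : (t • q + p) ^ 2 = (t * t) • q ^ 2 + (2 * t) • (p * q) + p ^ 2 := by
        rw [smul_eq_C_mul, smul_eq_C_mul, smul_eq_C_mul, map_mul, map_mul, map_ofNat]
        ring
      have h0 := hsq (t • q + p)
      rw [key] at h0
      simpa [mul_comm, mul_assoc, mul_left_comm] using h0
  intro n
  -- per-term bound
  have term : ∀ m : ℕ, |L (X 0 ^ m * X 1 ^ (n - m))| ≤ L 1 * (a ^ m * b ^ (n - m)) := by
    intro m
    have h1 : (L (X 0 ^ m * X 1 ^ (n - m))) ^ 2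
        ≤ (L 1 * (a ^ m * b ^ (n - m))) ^ 2 := by
      have hcs := cs (X 0 ^ m) (X 1 ^ (n - m))
      have hxm := hx m
      have hym := hy (n - m)
      rw [pow_mul', pow_mul'] at hxm hym
      calc (L (X 0 ^ m * X 1 ^ (n - m))) ^ 2
          ≤ L ((X 0 ^ m) ^ 2) * L ((X 1 ^ (n - m)) ^ 2) := hcs
        _ ≤ (L 1 * (a ^ m) ^ 2) * (L 1 * (b ^ (n - m)) ^ 2) :=
            mul_le_mul hxm hym (hsq _) (by positivity)
        _ = (L 1 * (a ^ m * b ^ (n - m))) ^ 2 := by ring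
    have h2 : 0 ≤ L 1 * (a ^ m * b ^ (n - m)) := by positivity
    calc |L (X 0 ^ m * X 1 ^ (n - m))| = Real.sqrt ((L (X 0 ^ m * X 1 ^ (n - m))) ^ 2) :=
          (Real.sqrt_sq_eq_abs _).symm
      _ ≤ Real.sqrt ((L 1 * (a ^ m * b ^ (n - m))) ^ 2) := Real.sqrt_le_sqrt h1
      _ = L 1 * (a ^ m * b ^ (n - m)) := Real.sqrt_sq h2
  rw [sub_pow, map_sum]
  refine (Finset.abs_sum_le_sum_abs _ _).trans ?_
  have rhs : L 1 * (a + b) ^ n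
      = ∑ m ∈ Finset.range (n + 1), L 1 * (a ^ m * b ^ (n - m)) * n.choose m := by
    rw [add_pow, Finset.mul_sum]
    exact Finset.sum_congr rfl fun m _ => by ring
  rw [rhs]
  apply Finset.sum_le_sum
  intro m _
  have hrw : ((-1 : MvPolynomial (Fin 2) ℝ) ^ (m + n) * X 0 ^ m * X 1 ^ (n - m)
      * (n.choose m : MvPolynomial (Fin 2) ℝ))
      = (((-1 : ℝ) ^ (m + n) * n.choose m) • (X 0 ^ m * X 1 ^ (n - m))) := by
    simp only [smul_eq_C_mul, map_mul, map_pow, map_natCast, map_neg, map_one]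
    ring
  rw [hrw, map_smul, smul_eq_mul, abs_mul, abs_mul]
  have h1 : |((-1 : ℝ)) ^ (m + n)| = 1 := by simp
  rw [h1, one_mul, Nat.abs_cast, mul_comm]
  exact mul_le_mul_of_nonneg_right (term m) (Nat.cast_nonneg _)
end

section
/- For every n ∈ ℕ and real numbers t₁, …, tₙ, the polarization identity holds: n! · t₁⋯tₙ = (1/2ⁿ) · ∑_{ε ∈ {−1,1}ⁿ} (∏ᵢ εᵢ) · (∑ᵢ εᵢ tᵢ)ⁿ. -/
open Finset

private lemma bool_sum_pow (m : ℕ) :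
    (∑ b : Bool, (if b then (1:ℝ) else -1) ^ m) = if m % 2 = 1 then 0 else 2 := by
  rcases Nat.even_or_odd m with h | h
  · simp [Fintype.sum_bool, h.neg_one_pow, Nat.even_iff.1 h]
  · simp [Fintype.sum_bool, h.neg_one_pow, Nat.odd_iff.1 h]

private lemma prod_comp_univ {n : ℕ} (f : Fin n → ℝ) (g : Fin n → Fin n) :
    ∏ k, f (g k) = ∏ i, f i ^ #{k ∈ (univ : Finset (Fin n)) | g k = i} := by
  have h : ∏ k, f (g k) = ∏ b ∈ univ.image g, f b ^ #{k ∈ (univ : Finset (Fin n)) | g k = b} :=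
    Finset.prod_comp f g
  rw [h]
  apply Finset.prod_subset (subset_univ _)
  intro b _ hb
  have : #{k ∈ (univ : Finset (Fin n)) | g k = b} = 0 := by
    rw [card_eq_zero, filter_eq_empty_iff]
    intro k _ hk
    exact hb (mem_image.2 ⟨k, mem_univ k, hk⟩)
  simp [this]

private lemma card_bij_filter (n : ℕ) :
    #{g ∈ (univ : Finset (Fin n → Fin n)) | Function.Bijective g} = n.factorial := by
  have e : Equiv.Perm (Fin n) ≃ {g : Fin n → Fin n // Function.Bijective g} :=
    { toFun := fun σ => ⟨σ, σ.bijective⟩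
      invFun := fun g => Equiv.ofBijective g.1 g.2
      left_inv := fun σ => Equiv.ext fun x => rfl
      right_inv := fun g => Subtype.ext rfl }
  rw [← Fintype.card_subtype, ← Fintype.card_congr e, Fintype.card_perm, Fintype.card_fin]

theorem polarization_identity (n : ℕ) (t : Fin n → ℝ) :
    (n.factorial : ℝ) * ∏ i, t i =
      (1 / 2 ^ n) * ∑ ε : Fin n → Bool,
        (∏ i, (if ε i then (1 : ℝ) else -1)) *
          (∑ i, (if ε i then (1 : ℝ) else -1) * t i) ^ n := by
  rw [one_div, inv_mul_eq_div, eq_div_iff (by positivity), mul_comm _ ((2:ℝ)^n)]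
  symm
  calc
    ∑ ε : Fin n → Bool,
        (∏ i, (if ε i then (1 : ℝ) else -1)) *
          (∑ i, (if ε i then (1 : ℝ) else -1) * t i) ^ n
      = ∑ ε : Fin n → Bool, ∑ g : Fin n → Fin n,
          (∏ k, t (g k)) * ∏ i, (if ε i then (1:ℝ) else -1) ^ (#{k ∈ (univ : Finset (Fin n)) | g k = i} + 1) := by
        refine Finset.sum_congr rfl fun ε _ => ?_
        rw [Fintype.sum_pow, Finset.mul_sum]
        refine Finset.sum_congr rfl fun g _ => ?_
        have h1 : (∏ i, (if ε i then (1:ℝ) else -1) ^ (#{k ∈ (univ : Finset (Fin n)) | g k = i} + 1))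
            = (∏ i, (if ε i then (1:ℝ) else -1)) *
              ∏ i, (if ε i then (1:ℝ) else -1) ^ (#{k ∈ (univ : Finset (Fin n)) | g k = i}) := by
          rw [← Finset.prod_mul_distrib]
          exact Finset.prod_congr rfl fun i _ => by rw [pow_succ, mul_comm]
        rw [h1, Finset.prod_mul_distrib,
          ← prod_comp_univ (fun i => if ε i then (1:ℝ) else -1) g]
        ring
    _ = ∑ g : Fin n → Fin n, (∏ k, t (g k)) *
          ∏ i, ∑ b : Bool, (if b then (1:ℝ) else -1) ^ (#{k ∈ (univ : Finset (Fin n)) | g k = i} + 1) := by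
        rw [Finset.sum_comm]
        refine Finset.sum_congr rfl fun g _ => ?_
        rw [Fintype.prod_sum, ← Finset.mul_sum]
    _ = ∑ g : Fin n → Fin n, (∏ k, t (g k)) *
          (if Function.Bijective g then (2:ℝ)^n else 0) := by
        refine Finset.sum_congr rfl fun g _ => ?_
        congr 1
        simp_rw [bool_sum_pow]
        by_cases hg : Function.Bijective g
        · rw [if_pos hg]
          have hfib : ∀ i, #{k ∈ (univ : Finset (Fin n)) | g k = i} = 1 := by
            intro i
            rw [card_eq_one]
            obtain ⟨k, hk⟩ := hg.surjective i
            exact ⟨k, by ext k'; simp [mem_filter, hg.injective.eq_iff, ← hk]⟩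
          simp [hfib]
        · rw [if_neg hg]
          have : ¬ Function.Surjective g := fun hs =>
            hg (Finite.surjective_iff_bijective.1 hs)
          obtain ⟨i, hi⟩ := not_forall.1 this
          refine Finset.prod_eq_zero (mem_univ i) ?_
          have : #{k ∈ (univ : Finset (Fin n)) | g k = i} = 0 := by
            rw [card_eq_zero, filter_eq_empty_iff]
            intro k _
            exact fun hk => hi ⟨k, hk⟩
          simp [this]
    _ = ∑ g ∈ {g ∈ (univ : Finset (Fin n → Fin n)) | Function.Bijective g},
          (∏ k, t (g k)) * (2:ℝ)^n := by
        rw [Finset.sum_filter]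
        refine Finset.sum_congr rfl fun g _ => ?_
        by_cases hg : Function.Bijective g <;> simp [hg]
    _ = ∑ g ∈ {g ∈ (univ : Finset (Fin n → Fin n)) | Function.Bijective g},
          (∏ i, t i) * (2:ℝ)^n := by
        refine Finset.sum_congr rfl fun g hg => ?_
        have hb : Function.Bijective g := (mem_filter.1 hg).2
        have h2 := (Equiv.ofBijective g hb).prod_comp t
        rw [show ⇑(Equiv.ofBijective g hb) = g from rfl] at h2
        rw [h2]
    _ = (2:ℝ)^n * ((n.factorial : ℝ) * ∏ i, t i) := by
        rw [Finset.sum_const, card_bij_filter, nsmul_eq_mul]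
        ring
end
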